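/- Let G be an omniconjugated graph and let E be a finite set of edges, each consisting of two distinct internal nodes of G. Then the graph G ∪ E is omniconjugated. -/
import Mathlib


open scoped symmDiff

namespace Kekule

abbrev Node := ℕ
abbrev Graph := Finset (Finset Node)

/-- `G` is a graph: every edge is a 2-element set of nodes. -/
def IsGraph (G : Graph) : Prop := ∀ e ∈ G, e.card = 2

/-- The nodes of a graph: the elements of its edges. -/
def nodes (G : Graph) : Finset Node := G.biUnion id

/-- The number of edges of `G` containing `v`. -/
def deg (G : Graph) (v : Node) : ℕ := (G.filter (fun e => v ∈ e)).card

/-- A port is a node contained in exactly one edge. -/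
def ports (G : Graph) : Finset Node := (nodes G).filter (fun v => deg G v = 1)

/-- An internal node is a node that is not a port. -/
def internal (G : Graph) : Finset Node := (nodes G).filter (fun v => deg G v ≠ 1)

/-- A Kekulé state of `G`: a subgraph `W ⊆ G` such that every internal node
of `G` lies in exactly one edge of `W`. -/
def IsKekule (G W : Graph) : Prop := W ⊆ G ∧ ∀ v ∈ internal G, deg W v = 1

/-- A curve in `G`: a subgraph `C ⊆ G` such that every node of `C` that is
internal in `G` lies in exactly two edges of `C`. -/
def IsCurve (G C : Graph) : Prop :=
  C ⊆ G ∧ ∀ v ∈ nodes C, v ∈ internal G → deg C v = 2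

/-- `(C, W)` is an alternating curve in `G`: both are subgraphs of `G`,
`C` is a curve in `G`, and `W ∩ C` is a Kekulé state of `C`. -/
def IsAlternating (G C W : Graph) : Prop :=
  W ⊆ G ∧ IsCurve G C ∧ IsKekule C (W ∩ C)

/-- `W|P`: the set of ports in `P` that lie in some edge of `W`. -/
def rest (W : Graph) (P : Finset Node) : Finset Node := P ∩ nodes W

/-- The set of Kekulé port assignments of `G`. -/
def KP (G : Graph) : Set (Finset Node) :=
  {g | ∃ W, IsKekule G W ∧ rest W (ports G) = g}

/-- A cell `K` over `P` is a Kekulé cell if it is the set of Kekulé port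
assignments of some graph with port set `P`. -/
def IsKekuleCell (P : Finset Node) (K : Set (Finset Node)) : Prop :=
  ∃ G, IsGraph G ∧ ports G = P ∧ KP G = K

/-- A channel: a 2-element subset of `P`. -/
def IsChannel (P : Finset Node) (c : Finset Node) : Prop := c ⊆ P ∧ c.card = 2

/-- A port `p` is flexible for a cell `K`. -/
def Flexible (K : Set (Finset Node)) (p : Node) : Prop :=
  ∃ g ∈ K, ∃ g' ∈ K, p ∈ g ∧ p ∉ g'

/-- Hamming distance between two port assignments. -/
def hdist (k k' : Finset Node) : ℕ := (k ∆ k').card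

/-- The Hamming diameter of `K` equals `n`. -/
def HamDiamEq (K : Set (Finset Node)) (n : ℕ) : Prop :=
  (∃ k ∈ K, ∃ k' ∈ K, hdist k k' = n) ∧ ∀ k ∈ K, ∀ k' ∈ K, hdist k k' ≤ n

/-- `G` is connected: nonempty, and any two distinct nodes are joined by a walk. -/
def Connected (G : Graph) : Prop :=
  G.Nonempty ∧ ∀ p ∈ nodes G, ∀ q ∈ nodes G, p ≠ q →
    ∃ (n : ℕ) (f : ℕ → Node), f 0 = p ∧ f n = q ∧
      ∀ i < n, ({f i, f (i + 1)} : Finset Node) ∈ G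

/-- `C` is a simple path between `p` and `q`. -/
def IsSimplePath (C : Graph) (p q : Node) : Prop :=
  Connected C ∧ ports C = {p, q} ∧
    ∀ v ∈ nodes C, v ≠ p → v ≠ q → deg C v = 2

/-- A cycle: a connected graph all of whose nodes lie in exactly two edges. -/
def IsCycle (C : Graph) : Prop :=
  Connected C ∧ ∀ v ∈ nodes C, deg C v = 2

/-- A semi-Kekulé state of `G`: every internal node of `G` lies in an odd
number of edges of `W`. -/
def IsSemiKekule (G W : Graph) : Prop :=
  W ⊆ G ∧ ∀ v ∈ internal G, deg W v % 2 = 1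

/-- The signature of `G`. -/
def sig (G : Graph) : ℕ := (internal G).card % 2

/-- `G` is omniconjugated. -/
def Omniconjugated (G : Graph) : Prop :=
  2 ≤ (ports G).card ∧ KP G = {g | g ⊆ ports G ∧ g.card % 2 = sig G}

instance : Std.Commutative (α := Finset Node) (· ∆ ·) := ⟨symmDiff_comm⟩
instance : Std.Associative (α := Finset Node) (· ∆ ·) := ⟨symmDiff_assoc⟩

/-- The `⊕`-sum of a finite family of port assignments. -/
def xorSum (D : Finset (Finset Node)) : Finset Node := D.fold (· ∆ ·) ∅ id


lemma mem_nodes {G : Graph} {v : Node} : v ∈ nodes G ↔ ∃ e ∈ G, v ∈ e := by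
  simp [nodes, Finset.mem_biUnion]

lemma nodes_mono {W H : Graph} (h : W ⊆ H) : nodes W ⊆ nodes H := by
  intro v hv
  obtain ⟨e, he, hve⟩ := mem_nodes.mp hv
  exact mem_nodes.mpr ⟨e, h he, hve⟩

lemma deg_mono {W H : Graph} (h : W ⊆ H) (v : Node) : deg W v ≤ deg H v :=
  Finset.card_le_card (Finset.filter_subset_filter _ h)

lemma mem_nodes_iff_deg_pos {W : Graph} {v : Node} : v ∈ nodes W ↔ 0 < deg W v := by
  rw [mem_nodes, deg, Finset.card_pos, Finset.filter_nonempty_iff]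

lemma kekule_parity (H W : Graph) (hH : IsGraph H) (hW : IsKekule H W) :
    (rest W (ports H)).card % 2 = (internal H).card % 2 := by
  have hsub := hW.1
  have hsum : ∑ v ∈ nodes W, deg W v = 2 * W.card := by
    calc ∑ v ∈ nodes W, deg W v
        = ∑ v ∈ nodes W, ∑ e ∈ W, (if v ∈ e then 1 else 0) :=
          Finset.sum_congr rfl fun v _ => Finset.card_filter _ _
      _ = ∑ e ∈ W, ∑ v ∈ nodes W, (if v ∈ e then 1 else 0) := Finset.sum_comm
      _ = ∑ e ∈ W, ((nodes W).filter (· ∈ e)).card :=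
          Finset.sum_congr rfl fun e _ => (Finset.card_filter _ _).symm
      _ = ∑ e ∈ W, e.card := by
          refine Finset.sum_congr rfl fun e he => ?_
          rw [Finset.filter_mem_eq_inter, Finset.inter_eq_right.mpr
            (fun v hv => mem_nodes.mpr ⟨e, he, hv⟩)]
      _ = ∑ e ∈ W, 2 := Finset.sum_congr rfl fun e he => hH e (hsub he)
      _ = 2 * W.card := by rw [Finset.sum_const, smul_eq_mul, mul_comm]
  have hint_sub : internal H ⊆ nodes W := fun v hv =>
    mem_nodes_iff_deg_pos.mpr (by rw [hW.2 v hv]; norm_num)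
  have hrest_sub : rest W (ports H) ⊆ nodes W := by
    intro v hv
    exact (Finset.mem_inter.mp hv).2
  have hcover : nodes W = internal H ∪ rest W (ports H) := by
    ext v
    constructor
    · intro hv
      have hvH : v ∈ nodes H := nodes_mono hsub hv
      by_cases h1 : deg H v = 1
      · exact Finset.mem_union_right _ (Finset.mem_inter.mpr
          ⟨Finset.mem_filter.mpr ⟨hvH, h1⟩, hv⟩)
      · exact Finset.mem_union_left _ (Finset.mem_filter.mpr ⟨hvH, h1⟩)
    · intro hv
      rcases Finset.mem_union.mp hv with h | h
      · exact hint_sub h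
      · exact hrest_sub h
  have hdisj : Disjoint (internal H) (rest W (ports H)) := by
    rw [Finset.disjoint_left]
    intro v hv hv'
    have h1 := (Finset.mem_filter.mp hv).2
    have h2 := (Finset.mem_filter.mp (Finset.mem_inter.mp hv').1).2
    exact h1 h2
  rw [hcover, Finset.sum_union hdisj] at hsum
  have h1 : ∑ v ∈ internal H, deg W v = (internal H).card := by
    rw [Finset.sum_congr rfl (fun v hv => hW.2 v hv), Finset.sum_const, smul_eq_mul, mul_one]
  have h2 : ∑ v ∈ rest W (ports H), deg W v = (rest W (ports H)).card := by
    rw [Finset.sum_congr rfl (fun v hv => ?_), Finset.sum_const, smul_eq_mul, mul_one]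
    have hvp : deg H v = 1 := (Finset.mem_filter.mp (Finset.mem_inter.mp hv).1).2
    have hle : deg W v ≤ 1 := hvp ▸ deg_mono hsub v
    have hpos : 0 < deg W v := mem_nodes_iff_deg_pos.mp (hrest_sub hv)
    omega
  rw [h1, h2] at hsum
  omega

/-- Adding edges between internal nodes of an omniconjugated
graph preserves omniconjugation. -/
theorem statement17 (G : Graph) (hG : IsGraph G) (homni : Omniconjugated G)
    (E : Finset (Finset Node))
    (hE : ∀ e ∈ E, ∃ u ∈ internal G, ∃ v ∈ internal G, u ≠ v ∧ e = {u, v}) :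
    Omniconjugated (G ∪ E) := by
  obtain ⟨hcard, hKP⟩ := homni
  have hEnotport : ∀ e ∈ E, ∀ v ∈ ports G, v ∉ e := by
    intro e he v hv hmem
    obtain ⟨u, hu, w, hw, huw, rfl⟩ := hE e he
    have hv1 := (Finset.mem_filter.mp hv).2
    have hu1 := (Finset.mem_filter.mp hu).2
    have hw1 := (Finset.mem_filter.mp hw).2
    rcases Finset.mem_insert.mp hmem with rfl | h
    · exact hu1 hv1
    · rw [Finset.mem_singleton.mp h] at hv1; exact hw1 hv1
  have hnodesE : nodes E ⊆ nodes G := by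
    intro v hv
    obtain ⟨e, he, hve⟩ := mem_nodes.mp hv
    obtain ⟨u, hu, w, hw, huw, rfl⟩ := hE e he
    have hu' : u ∈ nodes G := Finset.mem_of_mem_filter u hu
    have hw' : w ∈ nodes G := Finset.mem_of_mem_filter w hw
    rcases Finset.mem_insert.mp hve with rfl | h
    · exact hu'
    · rw [Finset.mem_singleton.mp h]; exact hw'
  have hnodes : nodes (G ∪ E) = nodes G := by
    apply subset_antisymm
    · intro v hv
      obtain ⟨e, he, hve⟩ := mem_nodes.mp hv
      rcases Finset.mem_union.mp he with h | h
      · exact mem_nodes.mpr ⟨e, h, hve⟩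
      · exact hnodesE (mem_nodes.mpr ⟨e, h, hve⟩)
    · exact nodes_mono Finset.subset_union_left
  have hdegport : ∀ v ∈ ports G, deg (G ∪ E) v = deg G v := by
    intro v hv
    unfold deg
    rw [Finset.filter_union,
      Finset.filter_eq_empty_iff.mpr (fun e he => hEnotport e he v hv),
      Finset.union_empty]
  have hdegle : ∀ v, deg G v ≤ deg (G ∪ E) v :=
    fun v => deg_mono Finset.subset_union_left v
  have hdegiff : ∀ v ∈ nodes G, (deg (G ∪ E) v = 1 ↔ deg G v = 1) := by
    intro v hv
    constructor
    · intro h1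
      by_contra h
      have hpos : 0 < deg G v := mem_nodes_iff_deg_pos.mp hv
      have := hdegle v
      omega
    · intro h1
      rw [hdegport v (Finset.mem_filter.mpr ⟨hv, h1⟩), h1]
  have hint : internal (G ∪ E) = internal G := by
    ext v
    simp only [internal, Finset.mem_filter, hnodes]
    constructor
    · rintro ⟨hvn, hd⟩
      exact ⟨hvn, fun h => hd ((hdegiff v hvn).mpr h)⟩
    · rintro ⟨hvn, hd⟩
      exact ⟨hvn, fun h => hd ((hdegiff v hvn).mp h)⟩
  have hports : ports (G ∪ E) = ports G := by
    ext v
    simp only [ports, Finset.mem_filter, hnodes]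
    constructor
    · rintro ⟨hvn, hd⟩
      exact ⟨hvn, (hdegiff v hvn).mp hd⟩
    · rintro ⟨hvn, hd⟩
      exact ⟨hvn, (hdegiff v hvn).mpr hd⟩
  have hgraph' : IsGraph (G ∪ E) := by
    intro e he
    rcases Finset.mem_union.mp he with h | h
    · exact hG e h
    · obtain ⟨u, hu, w, hw, huw, rfl⟩ := hE e h
      rw [Finset.card_insert_of_notMem (by simp [huw]), Finset.card_singleton]
  have hsig : sig (G ∪ E) = sig G := by rw [sig, sig, hint]
  refine ⟨hports ▸ hcard, ?_⟩
  rw [hports, hsig, ← hKP]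
  ext g
  constructor
  · rintro ⟨W, hW, rfl⟩
    rw [hKP, hports]
    have := kekule_parity (G ∪ E) W hgraph' hW
    rw [hports, hint] at this
    exact ⟨fun v hv => (Finset.mem_inter.mp hv).1, this⟩
  · rintro ⟨W, hW, hr⟩
    refine ⟨W, ⟨hW.1.trans Finset.subset_union_left, fun v hv => hW.2 v (hint ▸ hv)⟩, ?_⟩
    rw [hports]
    exact hr

end Kekule
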